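/- Assume the continuum hypothesis. Let X be a nonempty set and T : X → X a map whose set A of fixed points is nonempty of cardinality at most continuum, and such that x ≠ Tⁿ(x) for all n ≥ 1 and all x ∉ A. Then for each α ∈ (0,1) there exists a partial metric p on X such that (X,p) is a complete partial metric space and p(T(x),T(y)) ≤ max{α·p(x,y), p(x,x), p(y,y)} for all x, y ∈ X. -/

import Mathlib

open Filter Topology

/-- `p` is a partial metric on `X`. -/
def IsPartialMetric {X : Type*} (p : X → X → ℝ) : Prop :=
  (∀ x y : X, 0 ≤ p x y) ∧
  (∀ x y : X, x = y ↔ (p x x = p x y ∧ p x y = p y y)) ∧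
  (∀ x y : X, p x x ≤ p y x) ∧
  (∀ x y : X, p x y = p y x) ∧
  (∀ x y z : X, p x y ≤ p x z + p z y - p z z)

/-- The sequence `u` is Cauchy with limit `a` in the partial metric `p`:
`lim_{m,n → ∞} p (u m) (u n) = a`. -/
def PMCauchyTo {X : Type*} (p : X → X → ℝ) (u : ℕ → X) (a : ℝ) : Prop :=
  Tendsto (fun mn : ℕ × ℕ => p (u mn.1) (u mn.2)) atTop (𝓝 a)

/-- The sequence `u` properly converges to `x` in the partial metric `p`. -/
def PMProperConv {X : Type*} (p : X → X → ℝ) (u : ℕ → X) (x : X) : Prop :=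
  Tendsto (fun n => p (u n) x) atTop (𝓝 (p x x)) ∧
  Tendsto (fun n => p (u n) (u n)) atTop (𝓝 (p x x))

/-- The partial metric space `(X, p)` is complete: every Cauchy sequence
properly converges. -/
def PMComplete {X : Type*} (p : X → X → ℝ) : Prop :=
  ∀ (u : ℕ → X) (a : ℝ), PMCauchyTo p u a → ∃ x : X, PMProperConv p u x

/-- The partial metric space `(X, p)` is `0`-complete: every Cauchy sequence with
`lim_{m,n} p (u m) (u n) = 0` properly converges. -/
def PMZeroComplete {X : Type*} (p : X → X → ℝ) : Prop :=
  ∀ u : ℕ → X, PMCauchyTo p u 0 → ∃ x : X, PMProperConv p u x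

set_option linter.unusedSectionVars false
set_option linter.unusedVariables false
set_option maxHeartbeats 1000000

namespace Stmt14Aux


variable {X : Type*}

/-- grand-orbit relation -/
def Rel (T : X → X) (x y : X) : Prop := ∃ m n : ℕ, T^[m] x = T^[n] y

/-- the orbit of `x` eventually hits a fixed point -/
def Hits (T : X → X) (x : X) : Prop := ∃ n, T (T^[n] x) = T^[n] x

lemma rel_refl (T : X → X) (x : X) : Rel T x x := ⟨0, 0, rfl⟩

lemma rel_symm {T : X → X} {x y : X} (h : Rel T x y) : Rel T y x :=
  let ⟨m, n, h⟩ := h; ⟨n, m, h.symm⟩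

lemma rel_trans {T : X → X} {x y z : X} (h1 : Rel T x y) (h2 : Rel T y z) : Rel T x z := by
  obtain ⟨m, n, h1⟩ := h1
  obtain ⟨m', n', h2⟩ := h2
  refine ⟨m' + m, n + n', ?_⟩
  rw [Function.iterate_add_apply, h1, ← Function.iterate_add_apply, Nat.add_comm m' n,
    Function.iterate_add_apply, h2, ← Function.iterate_add_apply]

lemma rel_T (T : X → X) (x : X) : Rel T (T x) x := ⟨0, 1, rfl⟩

lemma hits_T_iff {T : X → X} {x : X} : Hits T (T x) ↔ Hits T x := by
  constructor
  · rintro ⟨n, hn⟩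
    exact ⟨n + 1, by rwa [Function.iterate_succ_apply]⟩
  · rintro ⟨n, hn⟩
    refine ⟨n, ?_⟩
    rw [← Function.iterate_succ_apply, Function.iterate_succ_apply', hn]
    exact hn

variable [Nonempty X]

noncomputable def rep (T : X → X) (x : X) : X := Classical.epsilon (Rel T x)

lemma rel_rep (T : X → X) (x : X) : Rel T x (rep T x) :=
  Classical.epsilon_spec ⟨x, rel_refl T x⟩

lemma rep_congr {T : X → X} {x y : X} (h : Rel T x y) : rep T x = rep T y := by
  unfold rep
  congr 1
  funext z
  exact propext ⟨fun hxz => rel_trans (rel_symm h) hxz, fun hyz => rel_trans h hyz⟩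

variable {T : X → X}

lemma eq_of_iterate_eq (hper : ∀ x : X, T x ≠ x → ∀ n : ℕ, 1 ≤ n → T^[n] x ≠ x)
    {x : X} (hx : ¬ Hits T x) {a b : ℕ} (h : T^[a] x = T^[b] x) : a = b := by
  rcases Nat.lt_trichotomy a b with hab | hab | hab
  · exfalso
    set z := T^[a] x with hz
    have hzz : T^[b - a] z = z := by
      rw [hz, ← Function.iterate_add_apply, Nat.sub_add_cancel hab.le, ← h]
    by_cases hTz : T z = z
    · exact hx ⟨a, hTz⟩
    · exact hper z hTz (b - a) (by omega) hzz
  · exact hab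
  · exfalso
    set z := T^[b] x with hz
    have hzz : T^[a - b] z = z := by
      rw [hz, ← Function.iterate_add_apply, Nat.sub_add_cancel hab.le, h]
    by_cases hTz : T z = z
    · exact hx ⟨b, hTz⟩
    · exact hper z hTz (a - b) (by omega) hzz

lemma diff_eq (hper : ∀ x : X, T x ≠ x → ∀ n : ℕ, 1 ≤ n → T^[n] x ≠ x)
    {x y : X} (hx : ¬ Hits T x) {m n m' n' : ℕ}
    (h : T^[m] x = T^[n] y) (h' : T^[m'] x = T^[n'] y) :
    (m : ℤ) - n = (m' : ℤ) - n' := by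
  have k1 : T^[n' + m] x = T^[n' + n] y := by
    rw [Function.iterate_add_apply, h, ← Function.iterate_add_apply]
  have k2 : T^[n + m'] x = T^[n + n'] y := by
    rw [Function.iterate_add_apply, h', ← Function.iterate_add_apply]
  have key : T^[n' + m] x = T^[n + m'] x := by rw [k1, k2, Nat.add_comm n' n]
  have := eq_of_iterate_eq hper hx key
  omega

lemma rel_rep' (T : X → X) (x : X) : ∃ m n : ℕ, T^[m] x = T^[n] (rep T x) := rel_rep T x

/-- the integer grading on grand orbits -/
noncomputable def dgr (T : X → X) (x : X) : ℤ :=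
  ((Classical.choose (rel_rep' T x) : ℕ) : ℤ) -
    ((Classical.choose (Classical.choose_spec (rel_rep' T x)) : ℕ) : ℤ)

lemma dgr_spec (T : X → X) (x : X) :
    ∃ m n : ℕ, (m : ℤ) - n = dgr T x ∧ T^[m] x = T^[n] (rep T x) :=
  ⟨_, _, rfl, Classical.choose_spec (Classical.choose_spec (rel_rep' T x))⟩

lemma dgr_eq (hper : ∀ x : X, T x ≠ x → ∀ n : ℕ, 1 ≤ n → T^[n] x ≠ x)
    {x : X} (hx : ¬ Hits T x) {m n : ℕ} (h : T^[m] x = T^[n] (rep T x)) :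
    dgr T x = (m : ℤ) - n := by
  obtain ⟨m', n', hd, h'⟩ := dgr_spec T x
  rw [← hd]
  exact diff_eq hper hx h' h

lemma not_hits_T {x : X} (hx : ¬ Hits T x) : ¬ Hits T (T x) := fun h => hx (hits_T_iff.mp h)

lemma dgr_T (hper : ∀ x : X, T x ≠ x → ∀ n : ℕ, 1 ≤ n → T^[n] x ≠ x)
    {x : X} (hx : ¬ Hits T x) : dgr T (T x) = dgr T x - 1 := by
  obtain ⟨m, n, hd, h⟩ := dgr_spec T x
  have hrep : rep T (T x) = rep T x := rep_congr (rel_T T x)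
  have h2 : T^[m] (T x) = T^[n + 1] (rep T (T x)) := by
    rw [hrep, ← Function.iterate_succ_apply, Function.iterate_succ_apply', h,
      Function.iterate_succ_apply']
  have := dgr_eq hper (not_hits_T hx) h2
  rw [this, ← hd]
  push_cast
  ring

open Classical in
/-- first entry time into the fixed point set -/
noncomputable def ft (T : X → X) (x : X) : ℕ := if h : Hits T x then Nat.find h else 0

noncomputable def efp (T : X → X) (x : X) : X := T^[ft T x] x

lemma efp_mem {x : X} (h : Hits T x) : T (efp T x) = efp T x := by
  classical
  rw [efp, ft, dif_pos h]
  exact Nat.find_spec h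

lemma ft_eq_zero {x : X} (hx : T x = x) : ft T x = 0 := by
  classical
  have h : Hits T x := ⟨0, hx⟩
  rw [ft, dif_pos h]
  simp [Nat.find_eq_zero h, hx]

lemma efp_of_fixed {x : X} (hx : T x = x) : efp T x = x := by
  rw [efp, ft_eq_zero hx]; rfl

lemma ft_pos {x : X} (hx : T x ≠ x) (h : Hits T x) : 1 ≤ ft T x := by
  classical
  rw [ft, dif_pos h]
  rcases Nat.eq_zero_or_pos (Nat.find h) with h0 | h1
  · exact absurd (by simpa using Nat.find_eq_zero h |>.mp h0) hx
  · exact h1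

lemma ft_T {x : X} (hx : T x ≠ x) (h : Hits T x) : ft T (T x) = ft T x - 1 := by
  classical
  have h' : Hits T (T x) := hits_T_iff.mpr h
  rw [ft, ft, dif_pos h, dif_pos h']
  have h1 : 1 ≤ Nat.find h := by
    rcases Nat.eq_zero_or_pos (Nat.find h) with h0 | h1
    · exact absurd (by simpa using Nat.find_eq_zero h |>.mp h0) hx
    · exact h1
  refine (Nat.find_eq_iff h').mpr ?_
  have hsucc : (Nat.find h - 1).succ = Nat.find h := by omega
  constructor
  · rw [← Function.iterate_succ_apply, hsucc]
    exact Nat.find_spec h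
  · intro k hk
    rw [← Function.iterate_succ_apply]
    exact Nat.find_min h (by omega)

lemma efp_T {x : X} (hx : T x ≠ x) (h : Hits T x) : efp T (T x) = efp T x := by
  have hsucc : (ft T x - 1).succ = ft T x := Nat.succ_pred_eq_of_pos (ft_pos hx h)
  rw [efp, efp, ft_T hx h, ← Function.iterate_succ_apply, hsucc]


lemma ft_eq_one {x : X} (hx : T x ≠ x) (hTx : T (T x) = T x) : ft T x = 1 := by
  classical
  have h : Hits T x := ⟨1, by simpa using hTx⟩
  rw [ft, dif_pos h]
  refine (Nat.find_eq_iff h).mpr ?_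
  refine ⟨by simpa using hTx, fun k hk => ?_⟩
  interval_cases k
  simpa using hx

open Classical in
noncomputable def psi (T : X → X) (g : X → ℝ) (x : X) : ℝ :=
  if Hits T x then g (efp T x) else 0

open Classical in
noncomputable def phi (T : X → X) (g : X → ℝ) (α : ℝ) (x : X) : ℝ :=
  if T x = x then g x
  else if Hits T x then α ^ (-(ft T x : ℤ)) else α ^ (-(dgr T x))

open Classical in
noncomputable def pm (T : X → X) (g : X → ℝ) (α : ℝ) (x y : X) : ℝ :=
  if x = y then psi T g x else max (phi T g α x) (phi T g α y)

section props
variable {g : X → ℝ} {α : ℝ}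

lemma hits_of_fixed {x : X} (hx : T x = x) : Hits T x := ⟨0, hx⟩

lemma psi_fixed {x : X} (hx : T x = x) : psi T g x = g x := by
  rw [psi, if_pos (hits_of_fixed hx), efp_of_fixed hx]

lemma phi_fixed {x : X} (hx : T x = x) : phi T g α x = g x := by
  rw [phi, if_pos hx]

lemma psi_nonneg (hg0 : ∀ x, T x = x → 0 ≤ g x) (x : X) : 0 ≤ psi T g x := by
  rw [psi]
  split
  · exact hg0 _ (efp_mem ‹_›)
  · exact le_refl 0

lemma psi_le_one (hg1 : ∀ x, T x = x → g x ≤ 1) (x : X) : psi T g x ≤ 1 := by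
  rw [psi]
  split
  · exact hg1 _ (efp_mem ‹_›)
  · exact zero_le_one

lemma psi_T (x : X) : psi T g (T x) = psi T g x := by
  by_cases hx : T x = x
  · rw [hx]
  · by_cases h : Hits T x
    · rw [psi, psi, if_pos h, if_pos (hits_T_iff.mpr h), efp_T hx h]
    · rw [psi, psi, if_neg h, if_neg (not_hits_T h)]

lemma one_lt_phi_of_hits (hα : 0 < α) (hα1 : α < 1) {x : X} (hx : T x ≠ x) (h : Hits T x) : 1 < phi T g α x := by
  rw [phi, if_neg hx, if_pos h]
  have h1 : α ^ (ft T x) < 1 :=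
    pow_lt_one₀ hα.le hα1 (by have := ft_pos hx h; omega)
  have h2 : (0:ℝ) < α ^ (ft T x) := pow_pos hα _
  rw [zpow_neg, zpow_natCast]
  exact one_lt_inv₀ h2 |>.mpr h1

lemma phi_pos (hα : 0 < α) {x : X} (hx : T x ≠ x) : 0 < phi T g α x := by
  rw [phi, if_neg hx]
  split
  · exact zpow_pos hα _
  · exact zpow_pos hα _

lemma psi_lt_phi (hα : 0 < α) (hα1 : α < 1) (hg1 : ∀ x, T x = x → g x ≤ 1) {x : X} (hx : T x ≠ x) : psi T g x < phi T g α x := by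
  by_cases h : Hits T x
  · calc psi T g x ≤ 1 := psi_le_one hg1 x
    _ < phi T g α x := one_lt_phi_of_hits hα hα1 hx h
  · rw [psi, if_neg h]
    exact phi_pos hα hx

lemma psi_le_phi (hα : 0 < α) (hα1 : α < 1) (hg1 : ∀ x, T x = x → g x ≤ 1) (x : X) : psi T g x ≤ phi T g α x := by
  by_cases hx : T x = x
  · rw [psi_fixed hx, phi_fixed hx]
  · exact (psi_lt_phi hα hα1 hg1 hx).le

lemma phi_nonneg (hα : 0 < α) (hα1 : α < 1) (hg0 : ∀ x, T x = x → 0 ≤ g x) (hg1 : ∀ x, T x = x → g x ≤ 1) (x : X) : 0 ≤ phi T g α x :=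
  (psi_nonneg hg0 x).trans (psi_le_phi hα hα1 hg1 x)

lemma phi_T_le (hα : 0 < α) (hα1 : α < 1) (hg1 : ∀ x, T x = x → g x ≤ 1) (hper : ∀ x : X, T x ≠ x → ∀ n : ℕ, 1 ≤ n → T^[n] x ≠ x)
    {x : X} (hx : T x ≠ x) : phi T g α (T x) ≤ α * phi T g α x := by
  by_cases hTx : T (T x) = T x
  · -- T x is fixed; first entry after one step
    have h : Hits T x := ⟨1, by simpa using hTx⟩
    have hft : ft T x = 1 := ft_eq_one hx hTx
    rw [phi_fixed hTx, phi, if_neg hx, if_pos h, hft]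
    have : α * α ^ (-(1:ℤ)) = 1 := by
      rw [zpow_neg, zpow_one]
      field_simp [ne_of_gt hα]
    rw [show ((1:ℕ):ℤ) = (1:ℤ) from rfl, this]
    exact hg1 _ hTx
  · by_cases h : Hits T x
    · have h' : Hits T (T x) := hits_T_iff.mpr h
      have h1 : 1 ≤ ft T x := ft_pos hx h
      rw [phi, if_neg hTx, if_pos h', ft_T hx h, phi, if_neg hx, if_pos h]
      have hc : (-(((ft T x - 1 : ℕ)):ℤ)) = 1 + (-(ft T x : ℤ)) := by
        have := Nat.cast_sub (R := ℤ) h1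
        omega
      rw [hc, zpow_add₀ (ne_of_gt hα), zpow_one]
    · have h' := not_hits_T h
      rw [phi, if_neg hTx, if_neg h', dgr_T hper h, phi, if_neg hx, if_neg h]
      have hc : (-(dgr T x - 1)) = 1 + (-(dgr T x)) := by ring
      rw [hc, zpow_add₀ (ne_of_gt hα), zpow_one]

lemma pm_self (x : X) : pm T g α x x = psi T g x := if_pos rfl

lemma pm_ne {x y : X} (h : x ≠ y) : pm T g α x y = max (phi T g α x) (phi T g α y) :=
  if_neg h

lemma pm_nonneg (hα : 0 < α) (hα1 : α < 1) (hg0 : ∀ x, T x = x → 0 ≤ g x)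
    (hg1 : ∀ x, T x = x → g x ≤ 1) (x y : X) : 0 ≤ pm T g α x y := by
  rw [pm]
  split
  · exact psi_nonneg hg0 x
  · exact le_max_of_le_left (phi_nonneg hα hα1 hg0 hg1 x)

lemma pm_comm (x y : X) : pm T g α x y = pm T g α y x := by
  rcases eq_or_ne x y with rfl | h
  · rfl
  · rw [pm_ne h, pm_ne h.symm, max_comm]

lemma pm_eq_iff (hα : 0 < α) (hα1 : α < 1) (hg1 : ∀ x, T x = x → g x ≤ 1)
    (hginj : ∀ x y, T x = x → T y = y → g x = g y → x = y) (x y : X) :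
    x = y ↔ (pm T g α x x = pm T g α x y ∧ pm T g α x y = pm T g α y y) := by
  constructor
  · rintro rfl; exact ⟨rfl, rfl⟩
  · rintro ⟨h1, h2⟩
    by_contra hxy
    rw [pm_self, pm_ne hxy] at h1
    rw [pm_ne hxy, pm_self] at h2
    have hfx : T x = x := by
      by_contra hx
      exact absurd (h1 ▸ le_max_left (phi T g α x) (phi T g α y))
        (not_le.mpr (psi_lt_phi hα hα1 hg1 hx))
    have hfy : T y = y := by
      by_contra hy
      exact absurd (h2 ▸ le_max_right (phi T g α x) (phi T g α y))
        (not_le.mpr (psi_lt_phi hα hα1 hg1 hy))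
    exact hxy (hginj x y hfx hfy (by
      have := h1.trans h2
      rwa [psi_fixed hfx, psi_fixed hfy] at this))

lemma pm_self_le (hα : 0 < α) (hα1 : α < 1) (hg1 : ∀ x, T x = x → g x ≤ 1)
    (x y : X) : pm T g α x x ≤ pm T g α y x := by
  rcases eq_or_ne y x with rfl | h
  · exact le_refl _
  · rw [pm_self, pm_ne h]
    exact le_max_of_le_right (psi_le_phi hα hα1 hg1 x)

lemma pm_triangle (hα : 0 < α) (hα1 : α < 1) (hg1 : ∀ x, T x = x → g x ≤ 1)
    (x y z : X) : pm T g α x y ≤ pm T g α x z + pm T g α z y - pm T g α z z := by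
  rcases eq_or_ne z x with rfl | hzx
  · simp
  rcases eq_or_ne z y with rfl | hzy
  · simp [pm_comm (T := T) (g := g) (α := α) x z]
  have hpsiz : psi T g z ≤ phi T g α z := psi_le_phi hα hα1 hg1 z
  rw [pm_self, pm_ne (Ne.symm hzx), pm_ne hzy]
  rcases eq_or_ne x y with rfl | hxy
  · rw [pm_self]
    have h1 : psi T g x ≤ phi T g α x := psi_le_phi hα hα1 hg1 x
    have h2 : phi T g α x ≤ max (phi T g α x) (phi T g α z) := le_max_left _ _
    have h3 : psi T g z ≤ max (phi T g α z) (phi T g α x) := le_trans hpsiz (le_max_left _ _)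
    nlinarith [le_max_left (phi T g α z) (phi T g α x)]
  · rw [pm_ne hxy]
    have h1 : phi T g α x ≤ max (phi T g α x) (phi T g α z) := le_max_left _ _
    have h2 : phi T g α y ≤ max (phi T g α z) (phi T g α y) := le_max_right _ _
    have h3 : psi T g z ≤ max (phi T g α z) (phi T g α y) := le_trans hpsiz (le_max_left _ _)
    have h4 : psi T g z ≤ max (phi T g α x) (phi T g α z) := le_trans hpsiz (le_max_right _ _)
    rw [max_le_iff]
    constructor
    · nlinarith
    · nlinarith

lemma pm_contract (hα : 0 < α) (hα1 : α < 1) (hg1 : ∀ x, T x = x → g x ≤ 1)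
    (hper : ∀ x : X, T x ≠ x → ∀ n : ℕ, 1 ≤ n → T^[n] x ≠ x) (x y : X) :
    pm T g α (T x) (T y) ≤ max (α * pm T g α x y) (max (pm T g α x x) (pm T g α y y)) := by
  by_cases hTxy : T x = T y
  · rw [pm, if_pos hTxy, psi_T, ← pm_self]
    exact le_max_of_le_right (le_max_left _ _)
  · have hxy : x ≠ y := fun h => hTxy (h ▸ rfl)
    have key : ∀ a b : X, a ≠ b →
        phi T g α (T a) ≤ max (α * pm T g α a b) (max (pm T g α a a) (pm T g α b b)) := by
      intro a b hab
      by_cases ha : T a = a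
      · calc phi T g α (T a) = phi T g α a := by rw [ha]
          _ = psi T g a := by rw [phi_fixed ha, psi_fixed ha]
          _ = pm T g α a a := (pm_self a).symm
          _ ≤ _ := le_max_of_le_right (le_max_left _ _)
      · calc phi T g α (T a) ≤ α * phi T g α a := phi_T_le hα hα1 hg1 hper ha
          _ ≤ α * pm T g α a b := by
            rw [pm_ne hab]
            exact mul_le_mul_of_nonneg_left (le_max_left _ _) hα.le
          _ ≤ _ := le_max_left _ _
    rw [pm_ne hTxy, max_le_iff]
    refine ⟨key x y hxy, ?_⟩
    calc phi T g α (T y) ≤ max (α * pm T g α y x) (max (pm T g α y y) (pm T g α x x)) :=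
        key y x hxy.symm
      _ = max (α * pm T g α x y) (max (pm T g α x x) (pm T g α y y)) := by
        rw [pm_comm y x, max_comm (pm T g α y y)]

lemma one_le_alpha_mul_phi (hα : 0 < α) (hα1 : α < 1) {x : X}
    (hx : T x ≠ x) (h : Hits T x) : 1 ≤ α * phi T g α x := by
  rw [phi, if_neg hx, if_pos h]
  obtain ⟨j, hj⟩ : ∃ j, ft T x = j + 1 := ⟨ft T x - 1, by have := ft_pos hx h; omega⟩
  rw [hj, zpow_neg, zpow_natCast]
  have key : α * (α ^ (j + 1))⁻¹ = (α ^ j)⁻¹ := by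
    rw [pow_succ, mul_inv, ← mul_assoc, mul_comm α, mul_assoc,
      mul_inv_cancel₀ (ne_of_gt hα), mul_one]
  rw [key]
  exact one_le_inv₀ (pow_pos hα j) |>.mpr (pow_le_one₀ hα.le hα1.le)

lemma psi_le_alpha_mul_phi (hα : 0 < α) (hα1 : α < 1) (hg1 : ∀ x, T x = x → g x ≤ 1)
    {x : X} (hx : T x ≠ x) : psi T g x ≤ α * phi T g α x := by
  by_cases h : Hits T x
  · exact (psi_le_one hg1 x).trans (one_le_alpha_mul_phi hα hα1 hx h)
  · rw [psi, if_neg h]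
    exact (mul_pos hα (phi_pos hα hx)).le

lemma pm_complete (hα : 0 < α) (hα1 : α < 1) (hg0 : ∀ x, T x = x → 0 ≤ g x)
    (hg1 : ∀ x, T x = x → g x ≤ 1)
    (hgclosed : IsClosed {r : ℝ | ∃ x, T x = x ∧ g x = r})
    (hg0mem : ∃ x, T x = x ∧ g x = 0)
    (u : ℕ → X) (a : ℝ)
    (hC : Tendsto (fun mn : ℕ × ℕ => pm T g α (u mn.1) (u mn.2)) atTop (𝓝 a)) :
    ∃ x : X, Tendsto (fun n => pm T g α (u n) x) atTop (𝓝 (pm T g α x x)) ∧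
      Tendsto (fun n => pm T g α (u n) (u n)) atTop (𝓝 (pm T g α x x)) := by
  by_cases hconst : ∃ N : ℕ, ∃ x0 : X, ∀ n ≥ N, u n = x0
  · obtain ⟨N, x0, hN⟩ := hconst
    have h1 : ∀ᶠ n in atTop, pm T g α (u n) x0 = pm T g α x0 x0 :=
      eventually_atTop.mpr ⟨N, fun n hn => by rw [hN n hn]⟩
    have h2 : ∀ᶠ n in atTop, pm T g α (u n) (u n) = pm T g α x0 x0 :=
      eventually_atTop.mpr ⟨N, fun n hn => by rw [hN n hn]⟩
    refine ⟨x0, Tendsto.congr' ?_ tendsto_const_nhds, Tendsto.congr' ?_ tendsto_const_nhds⟩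
    · exact h1.mono fun n hn => hn.symm
    · exact h2.mono fun n hn => hn.symm
  push_neg at hconst
  -- diagonal limit
  have hdiagmap : Tendsto (fun n : ℕ => ((n, n) : ℕ × ℕ)) atTop atTop := by
    rw [← prod_atTop_atTop_eq]
    exact tendsto_id.prodMk tendsto_id
  have hdiag : Tendsto (fun n => psi T g (u n)) atTop (𝓝 a) := by
    have := hC.comp hdiagmap
    simp only [Function.comp_def] at this
    simpa [pm_self] using this
  -- selection of distinct indices
  have hsel : ∀ N : ℕ, ∃ n, N ≤ n ∧ u n ≠ u N := by
    intro N
    obtain ⟨n, hn, hne⟩ := hconst N (u N)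
    exact ⟨n, hn, hne⟩
  choose m hm hne using hsel
  have hmt : Tendsto (fun N : ℕ => ((N, m N) : ℕ × ℕ)) atTop atTop := by
    rw [← prod_atTop_atTop_eq]
    exact tendsto_id.prodMk (tendsto_atTop_mono hm tendsto_id)
  have hup : Tendsto (fun N => pm T g α (u N) (u (m N))) atTop (𝓝 a) := by
    have := hC.comp hmt
    simpa [Function.comp_def] using this
  have hphi : Tendsto (fun n => phi T g α (u n)) atTop (𝓝 a) := by
    refine tendsto_of_tendsto_of_tendsto_of_le_of_le hdiag hup
      (fun n => psi_le_phi hα hα1 hg1 (u n)) (fun n => ?_)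
    rw [pm_ne (Ne.symm (hne n))]
    exact le_max_left _ _
  have ha0 : 0 ≤ a :=
    le_of_tendsto_of_tendsto' tendsto_const_nhds hdiag (fun n => psi_nonneg hg0 (u n))
  by_cases hoff : ∀ᶠ n in atTop, T (u n) = u n
  · -- eventually in the fixed point set
    have hmem : ∀ᶠ n in atTop, phi T g α (u n) ∈ {r : ℝ | ∃ x, T x = x ∧ g x = r} :=
      hoff.mono fun n hn => ⟨u n, hn, (phi_fixed hn).symm⟩
    obtain ⟨x, hx, hgx⟩ := hgclosed.mem_of_tendsto hphi hmem
    have hpxx : pm T g α x x = a := by rw [pm_self, psi_fixed hx, hgx]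
    refine ⟨x, ?_, ?_⟩
    · rw [hpxx]
      have hub : Tendsto (fun n => max (phi T g α (u n)) a) atTop (𝓝 a) := by
        have := hphi.max (tendsto_const_nhds (x := a) (f := atTop))
        rwa [max_self] at this
      refine tendsto_of_tendsto_of_tendsto_of_le_of_le tendsto_const_nhds hub
        (fun n => ?_) (fun n => ?_)
      · rcases eq_or_ne (u n) x with h | h
        · rw [h, pm_self, psi_fixed hx, hgx]
        · rw [pm_ne h, phi_fixed hx, hgx]
          exact le_max_right _ _
      · rcases eq_or_ne (u n) x with h | h
        · rw [h, pm_self, psi_fixed hx, hgx]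
          exact le_max_right _ _
        · rw [pm_ne h, phi_fixed hx, hgx]
    · rw [hpxx]
      simpa [pm_self] using hdiag
  · -- frequently outside the fixed point set : a = 0
    have hfreq : ∃ᶠ n in atTop, T (u n) ≠ u n := by
      rwa [Filter.not_eventually] at hoff
    obtain ⟨σ, hσmono, hσ⟩ := Filter.extraction_of_frequently_atTop hfreq
    have h1 : Tendsto (fun k => psi T g (u (σ k))) atTop (𝓝 a) :=
      hdiag.comp hσmono.tendsto_atTop
    have h2 : Tendsto (fun k => α * phi T g α (u (σ k))) atTop (𝓝 (α * a)) :=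
      (hphi.comp hσmono.tendsto_atTop).const_mul α
    have haa : a ≤ α * a :=
      le_of_tendsto_of_tendsto' h1 h2 (fun k => psi_le_alpha_mul_phi hα hα1 hg1 (hσ k))
    have ha : a = 0 := by nlinarith
    obtain ⟨x0, hx0, hgx0⟩ := hg0mem
    have hpxx : pm T g α x0 x0 = a := by rw [pm_self, psi_fixed hx0, hgx0, ha]
    refine ⟨x0, ?_, ?_⟩
    · rw [hpxx, ha]
      have hphi0 : Tendsto (fun n => phi T g α (u n)) atTop (𝓝 0) := ha ▸ hphi
      refine tendsto_of_tendsto_of_tendsto_of_le_of_le tendsto_const_nhds hphi0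
        (fun n => pm_nonneg hα hα1 hg0 hg1 (u n) x0) (fun n => ?_)
      rcases eq_or_ne (u n) x0 with h | h
      · rw [h, pm_self, psi_fixed hx0, hgx0]
        exact phi_nonneg hα hα1 hg0 hg1 x0
      · rw [pm_ne h]
        refine max_le (le_refl _) ?_
        rw [phi_fixed hx0, hgx0]
        exact phi_nonneg hα hα1 hg0 hg1 (u n)
    · rw [hpxx]
      simpa [pm_self] using hdiag

end props

open Classical in
noncomputable def gext (T : X → X) (g₀ : {x : X // T x = x} → ℝ) (x : X) : ℝ :=
  if h : T x = x then g₀ ⟨x, h⟩ else 0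

lemma gext_fixed {T : X → X} (g₀ : {x : X // T x = x} → ℝ) {x : X} (hx : T x = x) :
    gext T g₀ x = g₀ ⟨x, hx⟩ := dif_pos hx


universe v
lemma exists_g0 (A : Type v) [Nonempty A]
    (hCH : ∀ c : Cardinal.{v}, Cardinal.aleph0 < c → c ≤ Cardinal.continuum →
      c = Cardinal.continuum)
    (hcard : Cardinal.mk A ≤ Cardinal.continuum) :
    ∃ g₀ : A → ℝ, Function.Injective g₀ ∧ IsClosed (Set.range g₀) ∧
      (∀ a, g₀ a ∈ Set.Icc (0:ℝ) 1) ∧ (∃ a, g₀ a = 0) := by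
  by_cases hc : Countable A
  · by_cases hf : Finite A
    · haveI := Fintype.ofFinite A
      set n := Fintype.card A with hn
      have hnpos : 0 < n := Fintype.card_pos
      let e := Fintype.equivFin A
      refine ⟨fun a => (e a : ℕ) / n, ?_, ?_, ?_, ?_⟩
      · intro a b h
        have hn0 : (n : ℝ) ≠ 0 := Nat.cast_ne_zero.mpr hnpos.ne'
        field_simp at h
        exact e.injective (Fin.ext (Nat.cast_injective h))
      · exact (Set.finite_range _).isClosed
      · intro a
        constructor
        · positivity
        · rw [div_le_one (by exact_mod_cast hnpos)]
          exact_mod_cast (e a).2.le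
      · refine ⟨e.symm ⟨0, hnpos⟩, ?_⟩
        simp
    · haveI : Infinite A := not_finite_iff_infinite.mp hf
      obtain ⟨e⟩ : Nonempty (A ≃ ℕ) := nonempty_equiv_of_countable
      set h : ℕ → ℝ := fun k => if k = 0 then 0 else (2⁻¹ : ℝ) ^ k with hh
      have hpow : ∀ m : ℕ, (0:ℝ) < 2⁻¹ ^ m := fun m => pow_pos (by norm_num) m
      have hinj : Function.Injective h := by
        intro k l hkl
        by_cases hk : k = 0 <;> by_cases hl : l = 0
        · omega
        · subst hk; simp only [hh, if_pos rfl, if_neg hl] at hkl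
          exact absurd hkl.symm (hpow l).ne'
        · subst hl; simp only [hh, if_pos rfl, if_neg hk] at hkl
          exact absurd hkl (hpow k).ne'
        · simp only [hh, if_neg hk, if_neg hl] at hkl
          exact pow_right_injective₀ (by norm_num) (by norm_num) hkl
      have hrange : Set.range h = insert 0 (Set.range fun j : ℕ => (2⁻¹ : ℝ) ^ (j + 1)) := by
        ext r
        constructor
        · rintro ⟨k, rfl⟩
          by_cases hk : k = 0
          · subst hk; left; simp [hh]
          · right
            obtain ⟨j, rfl⟩ : ∃ j, k = j + 1 := ⟨k - 1, by omega⟩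
            exact ⟨j, by simp [hh]⟩
        · rintro (rfl | ⟨j, rfl⟩)
          · exact ⟨0, by simp [hh]⟩
          · exact ⟨j + 1, by simp [hh]⟩
      have hclosed : IsClosed (Set.range h) := by
        rw [hrange]
        have ht : Tendsto (fun j : ℕ => (2⁻¹ : ℝ) ^ (j + 1)) atTop (𝓝 0) := by
          have := tendsto_pow_atTop_nhds_zero_of_lt_one (r := (2⁻¹:ℝ)) (by norm_num) (by norm_num)
          exact this.comp (tendsto_add_atTop_nat 1)
        exact ht.isCompact_insert_range.isClosed
      refine ⟨fun a => h (e a), hinj.comp e.injective, ?_, ?_, ⟨e.symm 0, by simp [hh]⟩⟩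
      · have : Set.range (fun a => h (e a)) = Set.range h := e.surjective.range_comp h
        rw [this]; exact hclosed
      · intro a
        constructor
        · rw [hh]; dsimp only; split
          · exact le_refl 0
          · exact (hpow _).le
        · rw [hh]; dsimp only; split
          · exact zero_le_one
          · exact pow_le_one₀ (by norm_num) (by norm_num)
  · have hlt : Cardinal.aleph0 < Cardinal.mk A := by
      rw [lt_iff_not_ge]
      intro hle
      exact hc (Cardinal.mk_le_aleph0_iff.mp hle)
    have hmk : Cardinal.mk A = Cardinal.continuum := hCH _ hlt hcard
    have : Cardinal.lift.{0} (Cardinal.mk A) =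
        Cardinal.lift.{v} (Cardinal.mk (Set.Icc (0:ℝ) 1)) := by
      rw [hmk, Cardinal.mk_Icc_real (by norm_num : (0:ℝ) < 1), Cardinal.lift_continuum,
        Cardinal.lift_continuum]
    obtain ⟨e⟩ : Nonempty (A ≃ Set.Icc (0:ℝ) 1) := Cardinal.lift_mk_eq'.mp this
    refine ⟨fun a => (e a : ℝ), ?_, ?_, fun a => (e a).2, ?_⟩
    · exact Subtype.coe_injective.comp e.injective
    · have : Set.range (fun a => ((e a : ℝ))) = Set.Icc (0:ℝ) 1 := by
        have h1 := e.surjective.range_comp (g := fun t : Set.Icc (0:ℝ) 1 => (t : ℝ))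
        rw [Function.comp_def] at h1
        rw [h1]
        exact Subtype.range_coe
      rw [this]; exact isClosed_Icc
    · exact ⟨e.symm ⟨0, by norm_num⟩, by simp⟩

end Stmt14Aux

universe u

theorem stmt_14 {X : Type u} [Nonempty X]
    (hCH : ∀ c : Cardinal.{u}, Cardinal.aleph0 < c → c ≤ Cardinal.continuum →
      c = Cardinal.continuum)
    (T : X → X)
    (hA : {x : X | T x = x}.Nonempty)
    (hcard : Cardinal.mk {x : X // T x = x} ≤ Cardinal.continuum)
    (hper : ∀ x : X, T x ≠ x → ∀ n : ℕ, 1 ≤ n → T^[n] x ≠ x)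
    (α : ℝ) (hα : α ∈ Set.Ioo (0 : ℝ) 1) :
    ∃ p : X → X → ℝ, IsPartialMetric p ∧ PMComplete p ∧
      ∀ x y : X, p (T x) (T y) ≤ max (α * p x y) (max (p x x) (p y y)) := by
  classical
  obtain ⟨hα0, hα1⟩ := hα
  haveI : Nonempty {x : X // T x = x} := hA.to_subtype
  obtain ⟨g₀, hg₀inj, hg₀closed, hg₀mem, hg₀zero⟩ :=
    Stmt14Aux.exists_g0 {x : X // T x = x} hCH hcard
  set g : X → ℝ := Stmt14Aux.gext T g₀ with hgdef
  have hg0 : ∀ x, T x = x → 0 ≤ g x := fun x hx => by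
    rw [hgdef, Stmt14Aux.gext_fixed g₀ hx]; exact (hg₀mem _).1
  have hg1 : ∀ x, T x = x → g x ≤ 1 := fun x hx => by
    rw [hgdef, Stmt14Aux.gext_fixed g₀ hx]; exact (hg₀mem _).2
  have hginj : ∀ x y, T x = x → T y = y → g x = g y → x = y := by
    intro x y hx hy h
    rw [hgdef, Stmt14Aux.gext_fixed g₀ hx, Stmt14Aux.gext_fixed g₀ hy] at h
    exact congrArg Subtype.val (hg₀inj h)
  have hset : {r : ℝ | ∃ x, T x = x ∧ g x = r} = Set.range g₀ := by
    ext r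
    constructor
    · rintro ⟨x, hx, rfl⟩
      exact ⟨⟨x, hx⟩, (Stmt14Aux.gext_fixed g₀ hx).symm⟩
    · rintro ⟨a, rfl⟩
      exact ⟨a.1, a.2, Stmt14Aux.gext_fixed g₀ a.2⟩
  have hgclosed : IsClosed {r : ℝ | ∃ x, T x = x ∧ g x = r} := by
    rw [hset]; exact hg₀closed
  have hg0mem : ∃ x, T x = x ∧ g x = 0 := by
    obtain ⟨a, ha⟩ := hg₀zero
    exact ⟨a.1, a.2, by rw [hgdef, Stmt14Aux.gext_fixed g₀ a.2]; simpa using ha⟩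
  refine ⟨Stmt14Aux.pm T g α, ⟨?_, ?_, ?_, ?_, ?_⟩, ?_, ?_⟩
  · exact fun x y => Stmt14Aux.pm_nonneg hα0 hα1 hg0 hg1 x y
  · exact fun x y => Stmt14Aux.pm_eq_iff hα0 hα1 hg1 hginj x y
  · exact fun x y => Stmt14Aux.pm_self_le hα0 hα1 hg1 x y
  · exact fun x y => Stmt14Aux.pm_comm x y
  · exact fun x y z => Stmt14Aux.pm_triangle hα0 hα1 hg1 x y z
  · intro u a hC
    exact Stmt14Aux.pm_complete hα0 hα1 hg0 hg1 hgclosed hg0mem u a hC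
  · exact fun x y => Stmt14Aux.pm_contract hα0 hα1 hg1 hper x y
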